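/- Let ω_{n−1}⋯ω_1ω_0 be a semi-standard decomposition of an element of W with respect to some J ⊆ S. Then for each 0 ≤ i ≤ n−1 there exists an element of Π_{K^{(i)} ∖ {t^{(i)}}} that is not fixed by ω_i. -/

import Mathlib

open scoped Classical Pointwise

noncomputable section

namespace CoxeterCentralizer

/-- The geometric representation space `V`: formal `ℝ`-linear combinations of
the simple roots `α_s`, `s ∈ S`. -/
abbrev GV (S : Type*) := S →₀ ℝ

variable {S W : Type*} [Group W]

/-- The simple root `α_s`. -/
def alpha (s : S) : GV S := Finsupp.single s 1

/-- The value `⟨α_s, α_t⟩ = - cos (π / m(s,t))` of the bilinear form on simple roots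
(`m(s,t) = 0` encodes `m(s,t) = ∞`, where the value is `-1`). -/
def cform (M : CoxeterMatrix S) (s t : S) : ℝ :=
  if M s t = 0 then -1 else -Real.cos (Real.pi / (M s t : ℝ))

/-- The symmetric bilinear form `⟨·,·⟩` on the geometric representation space. -/
def form (M : CoxeterMatrix S) (v w : GV S) : ℝ :=
  v.sum fun s a => w.sum fun t b => a * b * cform M s t

/-- The property that a given action of `W` on `V` is the standard geometric
representation: each simple reflection acts by `s • v = v - 2⟨α_s, v⟩ α_s`. -/
def GeomAction (M : CoxeterMatrix S) (cs : CoxeterSystem M W) [MulAction W (GV S)] : Prop :=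
  ∀ (s : S) (v : GV S), cs.simple s • v = v - (2 * form M (alpha s) v) • alpha s

/-- The root system `Φ = W · Π`. -/
def Phi (M : CoxeterMatrix S) (cs : CoxeterSystem M W) [MulAction W (GV S)] : Set (GV S) :=
  {v | ∃ (w : W) (s : S), v = w • alpha s}

/-- The set of positive roots `Φ⁺ = Φ ∩ ℝ_{≥0} Π`. -/
def PhiPos (M : CoxeterMatrix S) (cs : CoxeterSystem M W) [MulAction W (GV S)] : Set (GV S) :=
  {v ∈ Phi M cs | ∀ s, 0 ≤ v s}

/-- `Φ_J`, the roots supported on `J`. -/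
def PhiIn (M : CoxeterMatrix S) (cs : CoxeterSystem M W) [MulAction W (GV S)]
    (J : Set S) : Set (GV S) :=
  {v ∈ Phi M cs | ∀ s, s ∉ J → v s = 0}

/-- `Φ_J^{⊥K}`, the roots supported on `J` orthogonal to all `α_s`, `s ∈ K`. -/
def PhiPerp (M : CoxeterMatrix S) (cs : CoxeterSystem M W) [MulAction W (GV S)]
    (J K : Set S) : Set (GV S) :=
  {v ∈ PhiIn M cs J | ∀ s ∈ K, form M v (alpha s) = 0}

/-- The reflection `s_γ = w s w⁻¹` along a root `γ = w • α_s`. -/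
def sref (M : CoxeterMatrix S) (cs : CoxeterSystem M W) [MulAction W (GV S)]
    (γ : GV S) : W :=
  if h : ∃ (w : W) (s : S), γ = w • alpha s then
    h.choose * cs.simple h.choose_spec.choose * h.choose⁻¹
  else 1

/-- The (standard) parabolic subgroup `W_I`. -/
def WP (M : CoxeterMatrix S) (cs : CoxeterSystem M W) (I : Set S) : Subgroup W :=
  Subgroup.closure (cs.simple '' I)

/-- `I ⊆ S` is of finite type if `W_I` is finite. -/
def FiniteType (M : CoxeterMatrix S) (cs : CoxeterSystem M W) (I : Set S) : Prop :=
  (WP M cs I : Set W).Finite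

/-- Adjacency in the Coxeter graph: `s` and `t` are joined by an edge iff `m(s,t) ≥ 3`
(including `m(s,t) = ∞`, encoded as `0`). -/
def Adj (M : CoxeterMatrix S) (s t : S) : Prop := 3 ≤ M s t ∨ M s t = 0

/-- `J` is adjacent to `K` if some element of `J` is joined by an edge to some element of `K`. -/
def AdjSets (M : CoxeterMatrix S) (J K : Set S) : Prop := ∃ s ∈ J, ∃ t ∈ K, Adj M s t

/-- `J` is apart from `K` if they are disjoint and not adjacent. -/
def Apart (M : CoxeterMatrix S) (J K : Set S) : Prop := J ∩ K = ∅ ∧ ¬ AdjSets M J K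

/-- Connectivity within `C ⊆ S` in the Coxeter graph. -/
def ConnIn (M : CoxeterMatrix S) (C : Set S) (s t : S) : Prop :=
  Relation.ReflTransGen (fun a b => b ∈ C ∧ Adj M a b) s t

/-- `C ⊆ S` is irreducible: nonempty and its induced Coxeter graph is connected. -/
def IsIrreducible (M : CoxeterMatrix S) (C : Set S) : Prop :=
  C.Nonempty ∧ ∀ s ∈ C, ∀ t ∈ C, ConnIn M C s t

/-- `D` is an irreducible component of `C`: a connected component of the Coxeter
graph induced on `C`. -/
def IsComponent (M : CoxeterMatrix S) (C D : Set S) : Prop :=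
  ∃ s ∈ C, D = {t ∈ C | ConnIn M C s t}

/-- The Coxeter matrix of type `A_n` (standard labelling, `0`-indexed). -/
def AMat (n : ℕ) : Fin n → Fin n → ℕ := fun i j =>
  if i = j then 1 else if i.1 + 1 = j.1 ∨ j.1 + 1 = i.1 then 3 else 2

/-- `C ⊆ S` is of the type given by the labelled Coxeter matrix `A` on `Fin n`. -/
def IsGraphType (M : CoxeterMatrix S) {n : ℕ} (A : Fin n → Fin n → ℕ) (C : Set S) : Prop :=
  ∃ r : Fin n → S, Function.Injective r ∧ C = Set.range r ∧ ∀ i j, M (r i) (r j) = A i j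

/-- `I` is `A_{>1}`-free: it has no irreducible component of type `A_n`, `2 ≤ n < ∞`. -/
def AFree (M : CoxeterMatrix S) (I : Set S) : Prop :=
  ∀ C, IsComponent M I C → ∀ n, 2 ≤ n → ¬ IsGraphType M (AMat n) C

/-- The reflection subgroup `W(Ψ)` generated by the reflections along the roots in `Ψ`. -/
def WRefl (M : CoxeterMatrix S) (cs : CoxeterSystem M W) [MulAction W (GV S)]
    (Ψ : Set (GV S)) : Subgroup W :=
  Subgroup.closure (sref M cs '' Ψ)

/-- The "root system" `W(Ψ) · Ψ` of the reflection subgroup `W(Ψ)`. -/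
def orb (M : CoxeterMatrix S) (cs : CoxeterSystem M W) [MulAction W (GV S)]
    (Ψ : Set (GV S)) : Set (GV S) :=
  {v | ∃ w ∈ WRefl M cs Ψ, ∃ γ ∈ Ψ, v = w • γ}

/-- The positive part `(W(Ψ) · Ψ)⁺` of the root system of `W(Ψ)`. -/
def orbPos (M : CoxeterMatrix S) (cs : CoxeterSystem M W) [MulAction W (GV S)]
    (Ψ : Set (GV S)) : Set (GV S) :=
  {v ∈ orb M cs Ψ | ∀ s, 0 ≤ v s}

/-- The simple system `Π(Ψ)` of the reflection subgroup `W(Ψ)`: those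
`γ ∈ (W(Ψ)·Ψ)⁺` such that any expression `γ = Σ c_i • β_i` with `c_i > 0` and
`β_i ∈ (W(Ψ)·Ψ)⁺` forces `β_i = γ` for all `i`. -/
def simpleSys (M : CoxeterMatrix S) (cs : CoxeterSystem M W) [MulAction W (GV S)]
    (Ψ : Set (GV S)) : Set (GV S) :=
  {γ ∈ orbPos M cs Ψ |
    ∀ (n : ℕ) (c : Fin n → ℝ) (β : Fin n → GV S),
      (∀ i, 0 < c i) → (∀ i, β i ∈ orbPos M cs Ψ) → γ = ∑ i, c i • β i →
      ∀ i, β i = γ}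

/-- The simple system `Π^{J,K} = Π(Φ_J^{⊥K})`. -/
def PiPerp (M : CoxeterMatrix S) (cs : CoxeterSystem M W) [MulAction W (GV S)]
    (J K : Set S) : Set (GV S) :=
  simpleSys M cs (PhiPerp M cs J K)

/-- The simple system `Π^I = Π(Φ^{⊥I})` of `W^{⊥I}`. -/
def PiI (M : CoxeterMatrix S) (cs : CoxeterSystem M W) [MulAction W (GV S)]
    (I : Set S) : Set (GV S) :=
  PiPerp M cs Set.univ I

/-- The subgroup `C_I = {w ∈ W : w • α_s = α_s for all s ∈ I}` (as a set). -/
def CIset (M : CoxeterMatrix S) (cs : CoxeterSystem M W) [MulAction W (GV S)]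
    (I : Set S) : Set W :=
  {w : W | ∀ s ∈ I, w • alpha s = alpha s}

/-- The subgroup `Y_I = {w ∈ C_I : w • (Φ^{⊥I})⁺ ⊆ Φ⁺}` (as a set). -/
def YIset (M : CoxeterMatrix S) (cs : CoxeterSystem M W) [MulAction W (GV S)]
    (I : Set S) : Set W :=
  {w ∈ CIset M cs I |
    ∀ γ ∈ PhiPerp M cs Set.univ I ∩ PhiPos M cs, w • γ ∈ PhiPos M cs}

/-- Adjacency of two simple roots of a reflection subgroup, in the Coxeter graph of the
reflection subgroup: the corresponding reflections do not commute. -/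
def RootAdj (M : CoxeterMatrix S) (cs : CoxeterSystem M W) [MulAction W (GV S)]
    (β β' : GV S) : Prop :=
  β ≠ β' ∧ sref M cs β * sref M cs β' ≠ sref M cs β' * sref M cs β

/-- Connectivity within a set `P` of roots in the Coxeter graph of the reflection
subgroup generated by the reflections along roots in `P`. -/
def RootConnIn (M : CoxeterMatrix S) (cs : CoxeterSystem M W) [MulAction W (GV S)]
    (P : Set (GV S)) (β β' : GV S) : Prop :=
  Relation.ReflTransGen (fun a b => b ∈ P ∧ RootAdj M cs a b) β β'

/-- The irreducible component of the simple system `P` containing the root `β`. -/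
def RootComp (M : CoxeterMatrix S) (cs : CoxeterSystem M W) [MulAction W (GV S)]
    (P : Set (GV S)) (β : GV S) : Set (GV S) :=
  {β' ∈ P | RootConnIn M cs P β β'}

/-- `C` is an irreducible component of the simple system `P`. -/
def IsRootComponent (M : CoxeterMatrix S) (cs : CoxeterSystem M W) [MulAction W (GV S)]
    (P C : Set (GV S)) : Prop :=
  ∃ β ∈ P, C = RootComp M cs P β

/-- The finite part `W^{⊥I}_fin` of the Coxeter system `(W^{⊥I}, R^I)`:
the subgroup generated by the finite irreducible components of `W^{⊥I}`. -/
def PerpFin (M : CoxeterMatrix S) (cs : CoxeterSystem M W) [MulAction W (GV S)]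
    (I : Set S) : Subgroup W :=
  Subgroup.closure (sref M cs ''
    {β ∈ PiI M cs I | ((WRefl M cs (RootComp M cs (PiI M cs I) β) : Set W)).Finite})

/-- The infinite part `W^{⊥I}_inf` of the Coxeter system `(W^{⊥I}, R^I)`:
the subgroup generated by the infinite irreducible components of `W^{⊥I}`. -/
def PerpInf (M : CoxeterMatrix S) (cs : CoxeterSystem M W) [MulAction W (GV S)]
    (I : Set S) : Subgroup W :=
  Subgroup.closure (sref M cs ''
    {β ∈ PiI M cs I | ¬ ((WRefl M cs (RootComp M cs (PiI M cs I) β) : Set W)).Finite})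

/-- `Π_J`, the set of simple roots with index in `J`. -/
def alphaSet (J : Set S) : Set (GV S) := alpha '' J

/-- `P` is a basis of the span of `T`. -/
def IsBasisOfSpan (P T : Set (GV S)) : Prop :=
  LinearIndependent ℝ (fun v : ↥P => (v : GV S)) ∧
    Submodule.span ℝ P = Submodule.span ℝ T

/-- The longest element `w_0(L)` of a finite parabolic subgroup `W_L`. -/
def w0 (M : CoxeterMatrix S) (cs : CoxeterSystem M W) (L : Set S) : W :=
  if h : ∃ w ∈ WP M cs L, ∀ u ∈ WP M cs L, cs.length u ≤ cs.length w then h.choose else 1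

/-- `J_{∼K}`: the set of elements of `J ∪ K` lying in the same connected component of the
Coxeter graph induced on `J ∪ K` as some element of `K`. -/
def sTilde (M : CoxeterMatrix S) (J K : Set S) : Set S :=
  {s ∈ J ∪ K | ∃ t ∈ K, ConnIn M (J ∪ K) t s}

/-- `S^{(Λ)}`: the set of injective maps (duplicate-free `Λ`-tuples) `Λ → S`. -/
def SInj (S Λ : Type*) := {x : Λ → S // Function.Injective x}

/-- `[x]`: the image of the tuple `x ∈ S^{(Λ)}`. -/
def rng {S Λ : Type*} (x : SInj S Λ) : Set S := Set.range x.1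

/-- `C_{x,y} = {w ∈ W : α_{x_λ} = w • α_{y_λ} for all λ}`. -/
def Cpair (M : CoxeterMatrix S) (cs : CoxeterSystem M W) [MulAction W (GV S)]
    {Λ : Type*} (x y : SInj S Λ) : Set W :=
  {w : W | ∀ l : Λ, w • alpha (y.1 l) = alpha (x.1 l)}

/-- `Y_{x,y} = {w ∈ C_{x,y} : w • (Φ^{⊥[y]})⁺ ⊆ Φ⁺}`. -/
def Ypair (M : CoxeterMatrix S) (cs : CoxeterSystem M W) [MulAction W (GV S)]
    {Λ : Type*} (x y : SInj S Λ) : Set W :=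
  {w ∈ Cpair M cs x y |
    ∀ γ ∈ PhiPerp M cs Set.univ (rng y) ∩ PhiPos M cs, w • γ ∈ PhiPos M cs}

/-- A semi-standard decomposition `u = ω_{n-1} ⋯ ω_1 ω_0` of an element `u ∈ Y_{z,y}`
with respect to `J ⊆ S`, with data `y^{(i)}`, `t^{(i)}`, `J^{(i)}`, supports
`K^{(i)} = ([y^{(i)}] ∪ J^{(i)})_{∼ t^{(i)}}` and
`ω_i = w_0(K^{(i)}) w_0(K^{(i)} ∖ {t^{(i)}})`. -/
structure SemiStd {S W : Type*} [Group W] (M : CoxeterMatrix S) (cs : CoxeterSystem M W)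
    [MulAction W (GV S)] (Λ : Type*) (u : W) (y z : SInj S Λ) (J : Set S) where
  n : ℕ
  ys : Fin (n + 1) → SInj S Λ
  ts : Fin n → S
  Js : Fin (n + 1) → Set S
  Ks : Fin n → Set S
  om : Fin n → W
  h_y0 : ys 0 = y
  h_yn : ys (Fin.last n) = z
  h_J0 : Js 0 = J
  h_K : ∀ i, Ks i = sTilde M (rng (ys i.castSucc) ∪ Js i.castSucc) {ts i}
  h_om : ∀ i, om i = w0 M cs (Ks i) * w0 M cs (Ks i \ {ts i})
  h_t_notin : ∀ i, ts i ∉ rng (ys i.castSucc) ∪ Js i.castSucc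
  h_t_adj : ∀ i, AdjSets M {ts i} (rng (ys i.castSucc))
  h_K_fin : ∀ i, FiniteType M cs (Ks i)
  h_Y : ∀ i, om i ∈ Ypair M cs (ys i.succ) (ys i.castSucc)
  h_J_map : ∀ i, (fun v => om i • v) '' alphaSet (Js i.castSucc) = alphaSet (Js i.succ)
  h_prod : u = (List.ofFn om).reverse.prod

variable {Λ : Type*} {M : CoxeterMatrix S} {cs : CoxeterSystem M W} [MulAction W (GV S)]

/-- `ω_i` is a wide transformation: its support intersects `J^{(i)} ∖ [y^{(i)}]`. -/
def SemiStd.Wide {u : W} {y z : SInj S Λ} {J : Set S} (D : SemiStd M cs Λ u y z J)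
    (i : Fin D.n) : Prop :=
  (D.Ks i ∩ (D.Js i.castSucc \ rng (D.ys i.castSucc))).Nonempty

/-- A semi-standard decomposition is standard if the lengths add up:
`ℓ(u) = Σ_j ℓ(ω_j)`. -/
def SemiStd.IsStd {u : W} {y z : SInj S Λ} {J : Set S} (D : SemiStd M cs Λ u y z J) : Prop :=
  cs.length u = ∑ i : Fin D.n, cs.length (D.om i)

section Development

/-! ### cform lemmas -/

lemma cform_self (s : S) : cform M s s = 1 := by
  have h1 : M s s = 1 := M.diagonal s
  simp [cform, h1, Real.cos_pi]

lemma cform_comm (s t : S) : cform M s t = cform M t s := by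
  rw [cform, cform, M.symmetric s t]

lemma cform_nonpos {s t : S} (h : s ≠ t) : cform M s t ≤ 0 := by
  rw [cform]
  split_ifs with h0
  · norm_num
  · have h2 : 2 ≤ M s t := by
      rcases Nat.lt_or_ge (M s t) 2 with h' | h'
      · interval_cases hmm : (M s t) <;> simp_all [M.off_diagonal s t h]
      · exact h'
    have hc : 0 ≤ Real.cos (Real.pi / (M s t : ℝ)) := by
      apply Real.cos_nonneg_of_mem_Icc
      constructor
      · have : (0:ℝ) ≤ Real.pi / (M s t : ℝ) := by positivity
        linarith [Real.pi_pos]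
      · have : Real.pi / (M s t : ℝ) ≤ Real.pi / 2 := by
          apply div_le_div_of_nonneg_left Real.pi_pos.le (by norm_num)
          exact_mod_cast h2
        linarith [Real.pi_pos]
    linarith

lemma cform_two {s t : S} (h : M s t = 2) : cform M s t = 0 := by
  rw [cform, if_neg (by omega)]
  norm_num [h]

/-! ### form bilinearity -/

lemma form_zero_left (w : GV S) : form M 0 w = 0 := Finsupp.sum_zero_index

lemma form_zero_right (v : GV S) : form M v 0 = 0 := by
  simp [form, Finsupp.sum_zero_index]

lemma form_add_left (u v w : GV S) : form M (u + v) w = form M u w + form M v w := by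
  refine Finsupp.sum_add_index' (fun s => by simp) (fun s a₁ a₂ => ?_)
  simp only [Finsupp.sum]
  rw [← Finset.sum_add_distrib]
  exact Finset.sum_congr rfl fun t _ => by ring

lemma form_smul_left (r : ℝ) (v w : GV S) : form M (r • v) w = r * form M v w := by
  rw [form, Finsupp.sum_smul_index (fun s => by simp), form, Finsupp.mul_sum]
  refine Finsupp.sum_congr fun s _ => ?_
  simp only [Finsupp.sum]
  rw [Finset.mul_sum]
  exact Finset.sum_congr rfl fun t _ => by ring

lemma form_add_right (v w₁ w₂ : GV S) : form M v (w₁ + w₂) = form M v w₁ + form M v w₂ := by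
  simp only [form, Finsupp.sum]
  rw [← Finset.sum_add_distrib]
  refine Finset.sum_congr rfl fun s _ => ?_
  have : ((w₁ + w₂).sum fun t b => v s * b * cform M s t)
      = (w₁.sum fun t b => v s * b * cform M s t) + (w₂.sum fun t b => v s * b * cform M s t) :=
    Finsupp.sum_add_index' (fun t => by ring) (fun t b₁ b₂ => by ring)
  simpa [Finsupp.sum] using this

lemma form_smul_right (r : ℝ) (v w : GV S) : form M v (r • w) = r * form M v w := by
  simp only [form]
  rw [Finsupp.mul_sum]
  refine Finsupp.sum_congr fun s _ => ?_
  rw [Finsupp.sum_smul_index (fun t => by ring), Finsupp.mul_sum]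
  exact Finsupp.sum_congr fun t _ => by ring


lemma form_alpha_left (s : S) (w : GV S) :
    form M (alpha s) w = w.sum fun t b => b * cform M s t := by
  rw [form, alpha, Finsupp.sum_single_index (by simp)]
  exact Finsupp.sum_congr fun t _ => by ring

lemma form_alpha_alpha (s t : S) : form M (alpha s) (alpha t) = cform M s t := by
  rw [form_alpha_left, alpha, Finsupp.sum_single_index (by simp)]
  ring

lemma form_self_alpha (s : S) : form M (alpha s) (alpha s) = 1 := by
  rw [form_alpha_alpha, cform_self]

lemma form_comm (v w : GV S) : form M v w = form M w v := by
  simp only [form, Finsupp.sum]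
  rw [Finset.sum_comm]
  exact Finset.sum_congr rfl fun t _ => Finset.sum_congr rfl fun s _ => by
    rw [cform_comm]; ring

lemma form_neg_right (v w : GV S) : form M v (-w) = - form M v w := by
  have := form_smul_right (M := M) (-1 : ℝ) v w
  simpa using this

lemma form_sub_left (u v w : GV S) : form M (u - v) w = form M u w - form M v w := by
  have h1 : u - v + v = u := by abel
  have := form_add_left (M := M) (u - v) v w
  rw [h1] at this
  linarith

lemma form_fsum_right {ι : Type*} (v : GV S) (F : Finset ι) (f : ι → GV S) :
    form M v (∑ g ∈ F, f g) = ∑ g ∈ F, form M v (f g) := by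
  classical
  induction F using Finset.induction with
  | empty => simp [form_zero_right]
  | insert a F' h ih =>
    rw [Finset.sum_insert h, Finset.sum_insert h, form_add_right, ih]

lemma form_fsum_left {ι : Type*} (v : GV S) (F : Finset ι) (f : ι → GV S) :
    form M (∑ g ∈ F, f g) v = ∑ g ∈ F, form M (f g) v := by
  rw [form_comm, form_fsum_right]
  exact Finset.sum_congr rfl fun g _ => form_comm _ _

/-- Decomposition of a vector as a combination of `alpha`s. -/
lemma eq_sum_alpha (v : GV S) : v = v.sum fun k a => a • alpha k := by
  conv_lhs => rw [← Finsupp.sum_single v]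
  exact Finsupp.sum_congr fun k _ => by
    rw [alpha, Finsupp.smul_single, smul_eq_mul, mul_one]

lemma form_expand_right (v w : GV S) :
    form M v w = w.sum fun k a => a * form M v (alpha k) := by
  conv_lhs => rw [eq_sum_alpha w]
  simp only [Finsupp.sum]
  rw [form_fsum_right]
  exact Finset.sum_congr rfl fun k _ => form_smul_right _ _ _

lemma form_sub_smul (a b : ℝ) (x u v : GV S) :
    form M (u - a • x) (v - b • x) =
      form M u v - b * form M u x - a * form M x v + a * b * form M x x := by
  rw [sub_eq_add_neg u, sub_eq_add_neg v, ← neg_smul, ← neg_smul]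
  simp only [form_add_left, form_add_right, form_smul_left, form_smul_right]
  ring

/-! ### nonneg/nonpos vectors -/

def NN (v : GV S) : Prop := ∀ r, 0 ≤ v r

def NP (v : GV S) : Prop := ∀ r, v r ≤ 0

lemma NN_alpha (s : S) : NN (alpha s) := by
  intro r
  rw [alpha, Finsupp.single_apply]
  split_ifs <;> norm_num

lemma NN_combo {a b : ℝ} (ha : 0 ≤ a) (hb : 0 ≤ b) {u v : GV S} (hu : NN u) (hv : NN v) :
    NN (a • u + b • v) := by
  intro r
  simp only [Finsupp.add_apply, Finsupp.smul_apply, smul_eq_mul]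
  have := hu r; have := hv r
  positivity

lemma NN_NP_zero {v : GV S} (h1 : NN v) (h2 : NP v) : v = 0 := by
  ext r
  exact le_antisymm (h2 r) (h1 r)

lemma NP_neg_of_NN {v : GV S} (h : NN v) : NP (-v) := fun r => by
  simpa using h r

/-! ### linearity of the action -/

lemma act_add (hact : GeomAction M cs) (w : W) :
    ∀ (u v : GV S), w • (u + v) = w • u + w • v := by
  refine cs.simple_induction (p := fun w => ∀ u v : GV S, w • (u + v) = w • u + w • v)
    w (fun i u v => ?_) (fun u v => by simp) ?_
  · rw [hact, hact, hact, form_add_right]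
    module
  · intro a b ha hb u v
    rw [mul_smul, mul_smul, mul_smul, hb, ha]

lemma act_smul (hact : GeomAction M cs) (w : W) :
    ∀ (r : ℝ) (v : GV S), w • (r • v) = r • (w • v) := by
  refine cs.simple_induction (p := fun w => ∀ (r : ℝ) (v : GV S), w • (r • v) = r • (w • v))
    w (fun i r v => ?_) (fun r v => by simp) ?_
  · rw [hact, hact, form_smul_right]
    module
  · intro a b ha hb r v
    rw [mul_smul, mul_smul, hb, ha]

lemma act_zero (hact : GeomAction M cs) (w : W) : w • (0 : GV S) = 0 := by
  have := act_smul hact w 0 0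
  simpa using this

lemma act_neg (hact : GeomAction M cs) (w : W) (v : GV S) : w • (-v) = -(w • v) := by
  have := act_smul hact w (-1) v
  simpa using this

lemma act_fsum (hact : GeomAction M cs) (w : W) {ι : Type*} (F : Finset ι) (f : ι → GV S) :
    w • (∑ g ∈ F, f g) = ∑ g ∈ F, w • (f g) := by
  classical
  induction F using Finset.induction with
  | empty => simp [act_zero hact]
  | insert a F' h ih =>
    rw [Finset.sum_insert h, Finset.sum_insert h, act_add hact, ih]

/-! ### invariance of the form -/

lemma form_inv (hact : GeomAction M cs) (w : W) :
    ∀ (u v : GV S), form M (w • u) (w • v) = form M u v := by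
  refine cs.simple_induction
    (p := fun w => ∀ u v : GV S, form M (w • u) (w • v) = form M u v)
    w (fun i u v => ?_) (fun u v => by simp) ?_
  · rw [hact, hact, form_sub_smul, form_self_alpha, form_comm u (alpha i)]
    ring
  · intro a b ha hb u v
    rw [mul_smul, mul_smul, ha, hb]


/-! ### dihedral trigonometry -/

def cc (M : CoxeterMatrix S) (i j : S) : ℝ :=
  if M i j = 0 then 1 else Real.cos (Real.pi / (M i j : ℝ))

lemma cform_eq_neg_cc (i j : S) : cform M i j = - cc M i j := by
  rw [cform, cc]
  split_ifs <;> ring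

lemma cc_comm (i j : S) : cc M i j = cc M j i := by
  rw [cc, cc, M.symmetric i j]

def dchain (c : ℝ) : ℕ → ℝ
  | 0 => 0
  | 1 => 1
  | (k+2) => 2*c*dchain c (k+1) - dchain c k

def gchain (c : ℝ) : ℕ → ℝ
  | 0 => -1
  | (k+1) => dchain c k

lemma dchain_zero (c : ℝ) : dchain c 0 = 0 := rfl
lemma dchain_one' (c : ℝ) : dchain c 1 = 1 := rfl
lemma gchain_zero (c : ℝ) : gchain c 0 = -1 := rfl
lemma gchain_succ (c : ℝ) (k : ℕ) : gchain c (k+1) = dchain c k := rfl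

lemma dchain_succ_succ (c : ℝ) (k : ℕ) :
    dchain c (k+2) = 2*c*dchain c (k+1) - dchain c k := rfl

lemma dchain_id1 (c : ℝ) (k : ℕ) : 2*c*dchain c k - gchain c k = dchain c (k+1) := by
  cases k with
  | zero => simp [dchain, gchain]
  | succ k => rw [gchain_succ, ← dchain_succ_succ]

lemma dchain_one : ∀ k : ℕ, dchain (1:ℝ) k = k := by
  intro k
  induction k using Nat.strong_induction_on with
  | _ k ih =>
    match k with
    | 0 => simp [dchain]
    | 1 => simp [dchain]
    | (k+2) =>
      rw [dchain_succ_succ, ih (k+1) (by omega), ih k (by omega)]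
      push_cast; ring

lemma dchain_sin {m : ℕ} (hm : 2 ≤ m) : ∀ k : ℕ,
    dchain (Real.cos (Real.pi / m)) k = Real.sin (k * (Real.pi / m)) / Real.sin (Real.pi / m) := by
  have hx0 : 0 < Real.pi / m := by positivity
  have hxpi : Real.pi / m < Real.pi := by
    have h2 : (2:ℝ) ≤ (m:ℝ) := by exact_mod_cast hm
    rw [div_lt_iff₀ (by positivity)]
    nlinarith [Real.pi_pos]
  have hs : Real.sin (Real.pi / m) ≠ 0 :=
    ne_of_gt (Real.sin_pos_of_pos_of_lt_pi hx0 hxpi)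
  intro k
  induction k using Nat.strong_induction_on with
  | _ k ih =>
    match k with
    | 0 => simp [dchain]
    | 1 => rw [dchain_one', Nat.cast_one, one_mul, div_self hs]
    | (k+2) =>
      rw [dchain_succ_succ, ih (k+1) (by omega), ih k (by omega)]
      have key : Real.sin (((k:ℝ)+2) * (Real.pi/m))
          = 2 * Real.cos (Real.pi/m) * Real.sin (((k:ℝ)+1) * (Real.pi/m))
            - Real.sin ((k:ℝ) * (Real.pi/m)) := by
        have e1 : ((k:ℝ)+2) * (Real.pi/m) = ((k:ℝ)+1) * (Real.pi/m) + (Real.pi/m) := by ring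
        have e2 : (k:ℝ) * (Real.pi/m) = ((k:ℝ)+1) * (Real.pi/m) - (Real.pi/m) := by ring
        rw [e1, e2, Real.sin_add, Real.sin_sub]
        ring
      push_cast
      rw [key]
      field_simp

lemma dchain_cc_nonneg {i j : S} (hij : i ≠ j) {k : ℕ} (hk : M i j = 0 ∨ k ≤ M i j) :
    0 ≤ dchain (cc M i j) k := by
  rcases hk with h0 | hk
  · rw [cc, if_pos h0, dchain_one]
    positivity
  · have h0 : M i j ≠ 0 ∨ True := Or.inr trivial
    by_cases hz : M i j = 0
    · rw [cc, if_pos hz, dchain_one]; positivity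
    · have hm : 2 ≤ M i j := by
        have := M.off_diagonal i j hij
        omega
      rw [cc, if_neg hz, dchain_sin hm]
      have hkm : (k:ℝ) ≤ (M i j : ℝ) := by exact_mod_cast hk
      have hmpos : (0:ℝ) < (M i j : ℝ) := by
        have : 0 < M i j := by omega
        exact_mod_cast this
      have hxpi : Real.pi / (M i j : ℝ) < Real.pi := by
        have h2 : (2:ℝ) ≤ (M i j : ℝ) := by exact_mod_cast hm
        rw [div_lt_iff₀ hmpos]
        nlinarith [Real.pi_pos]
      apply div_nonneg
      · apply Real.sin_nonneg_of_nonneg_of_le_pi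
        · positivity
        · calc (k:ℝ) * (Real.pi / (M i j : ℝ))
              ≤ (M i j : ℝ) * (Real.pi / (M i j : ℝ)) := by
                apply mul_le_mul_of_nonneg_right hkm (by positivity)
            _ = Real.pi := by field_simp
      · exact le_of_lt (Real.sin_pos_of_pos_of_lt_pi (by positivity) hxpi)


open CoxeterSystem in
lemma alt_act (hact : GeomAction M cs) : ∀ (k : ℕ) (i j : S), i ≠ j →
    (cs.wordProd (alternatingWord i j k)) • alpha i
      = (if Even k then dchain (cc M i j) (k+1) else dchain (cc M i j) k) • alpha i
        + (if Even k then dchain (cc M i j) k else dchain (cc M i j) (k+1)) • alpha j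
  ∧ (cs.wordProd (alternatingWord i j k)) • alpha j
      = -((if Even k then dchain (cc M i j) k else gchain (cc M i j) k) • alpha i)
        - (if Even k then gchain (cc M i j) k else dchain (cc M i j) k) • alpha j := by
  intro k
  induction k with
  | zero =>
    intro i j hij
    simp only [alternatingWord, wordProd_nil, one_smul, if_pos (Even.zero : Even (0:ℕ))]
    constructor
    · rw [dchain_one', dchain_zero]
      module
    · rw [dchain_zero, gchain_zero]
      module
  | succ k IH =>
    intro i j hij
    have hsucc : alternatingWord i j (k+1) = (alternatingWord j i k).concat j :=
      alternatingWord_succ i j k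
    rw [hsucc, wordProd_concat]
    set c := cc M i j with hc
    have hccomm : cc M j i = c := (cc_comm j i).trans rfl
    have hsji : cs.simple j • alpha i = alpha i + (2*c) • alpha j := by
      rw [hact, form_alpha_alpha, cform_eq_neg_cc, cc_comm j i]
      module
    have hsjj : cs.simple j • alpha j = -(alpha j) := by
      rw [hact, form_self_alpha]
      module
    obtain ⟨IH1, IH2⟩ := IH j i hij.symm
    rw [hccomm] at IH1 IH2
    constructor
    · rw [mul_smul, hsji, act_add hact, act_smul hact, IH1, IH2]
      rcases Nat.even_or_odd k with he | ho
      · simp only [Nat.even_add_one, he, not_true_eq_false, if_false, if_true]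
        rw [dchain_succ_succ, ← dchain_id1]
        module
      · have hne : ¬ Even k := Nat.not_even_iff_odd.mpr ho
        simp only [Nat.even_add_one, hne, not_false_eq_true, if_false, if_true]
        rw [dchain_succ_succ, ← dchain_id1]
        module
    · rw [mul_smul, hsjj, act_neg hact, IH1]
      rcases Nat.even_or_odd k with he | ho
      · simp only [Nat.even_add_one, he, not_true_eq_false, if_false, if_true, gchain_succ]
        module
      · have hne : ¬ Even k := Nat.not_even_iff_odd.mpr ho
        simp only [Nat.even_add_one, hne, not_false_eq_true, if_false, if_true, gchain_succ]
        module

/-! ### coordinates under parabolic actions -/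

lemma simple_act_self (hact : GeomAction M cs) (i : S) :
    cs.simple i • alpha i = -(alpha i) := by
  rw [hact, form_self_alpha]
  module

lemma act_coord (hact : GeomAction M cs) {X : Set S} {w : W}
    (hw : w ∈ Subgroup.closure (cs.simple '' X)) :
    ∀ (v : GV S) (r : S), r ∉ X → (w • v) r = v r := by
  refine Subgroup.closure_induction
    (p := fun w _ => ∀ (v : GV S) (r : S), r ∉ X → (w • v) r = v r) ?_ ?_ ?_ ?_ hw
  · rintro _ ⟨i, hiX, rfl⟩ v r hr
    have hir : alpha i r = 0 := by
      rw [alpha, Finsupp.single_apply, if_neg]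
      intro h; exact hr (h ▸ hiX)
    rw [hact]
    simp [hir]
  · intro v r _; simp
  · intro a b _ _ ha hb v r hr
    rw [mul_smul, ha _ r hr, hb _ r hr]
  · intro a _ ha v r hr
    have := ha (a⁻¹ • v) r hr
    rw [smul_inv_smul] at this
    exact this.symm

lemma alpha_self (i : S) : alpha i i = 1 := by simp [alpha]

lemma alpha_ne {i r : S} (h : r ≠ i) : alpha i r = 0 := by
  rw [alpha, Finsupp.single_apply, if_neg (fun hh => h hh.symm)]

/-! ### the positivity theorem (Humphreys 5.4) -/

open CoxeterSystem in
lemma dihedral_rep (hact : GeomAction M cs) {i j : S} (hij : i ≠ j) (n : ℕ)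
    (IH : ∀ m, m < n → ∀ (w : W) (r : S), cs.length w = m →
      cs.length (w * cs.simple r) = m + 1 → NN (w • alpha r)) :
    ∀ k, k ≤ n → ∀ w ∈ Subgroup.closure (cs.simple '' ({i, j} : Set S)), cs.length w = k →
      w = cs.wordProd (alternatingWord i j k) ∨ w = cs.wordProd (alternatingWord j i k) := by
  intro k
  induction k using Nat.strong_induction_on with
  | _ k ihk =>
    intro hkn w hwG hwk
    rcases Nat.eq_zero_or_pos k with rfl | hkpos
    · left
      have : w = 1 := cs.length_eq_zero_iff.mp hwk
      simp [this, alternatingWord, wordProd_nil]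
    · have hw1 : w ≠ 1 := by
        intro h; rw [h, cs.length_one] at hwk; omega
      obtain ⟨u, hu⟩ := cs.exists_rightDescent_of_ne_one hw1
      have hwu : cs.length (w * cs.simple u) + 1 = k := by
        rcases cs.length_mul_simple w u with h | h
        · exfalso; unfold CoxeterSystem.IsRightDescent at hu; omega
        · omega
      have huij : u ∈ ({i, j} : Set S) := by
        by_contra huij
        have hcan : (w * cs.simple u) * cs.simple u = w := cs.simple_mul_simple_cancel_right u
        have h1 : NN ((w * cs.simple u) • alpha u) := by
          refine IH (cs.length (w * cs.simple u)) (by omega) _ u rfl ?_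
          rw [hcan]; omega
        have h2 : w • alpha u = -((w * cs.simple u) • alpha u) := by
          conv_lhs => rw [← hcan]
          rw [mul_smul, simple_act_self hact, act_neg hact]
        have h3 : (w • alpha u) u = 1 := by
          rw [act_coord hact hwG (alpha u) u huij, alpha_self]
        rw [h2] at h3
        have := h1 u
        simp only [Finsupp.neg_apply] at h3
        linarith
      have hmemi : cs.simple i ∈ Subgroup.closure (cs.simple '' ({i, j} : Set S)) :=
        Subgroup.subset_closure ⟨i, by simp, rfl⟩
      have hmemj : cs.simple j ∈ Subgroup.closure (cs.simple '' ({i, j} : Set S)) :=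
        Subgroup.subset_closure ⟨j, by simp, rfl⟩
      -- w' = w * s_u
      rcases huij with rfl | rfl
      · -- u = i (i has been substituted by u) : target right disjunct
        set w' := w * cs.simple u with hw'
        have hw'G : w' ∈ Subgroup.closure (cs.simple '' ({u, j} : Set S)) :=
          mul_mem hwG hmemi
        have hcan : w' * cs.simple u = w := cs.simple_mul_simple_cancel_right u
        rcases ihk (k-1) (by omega) (by omega) w' hw'G (by omega) with hrep | hrep
        · -- w' = π(alt u j (k-1)) : w = π(alt j u k)
          right
          have e : alternatingWord j u k = (alternatingWord u j (k-1)).concat u := by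
            conv_lhs => rw [show k = (k-1)+1 by omega]
            exact alternatingWord_succ j u (k-1)
          rw [e, wordProd_concat, ← hrep, hcan]
        · -- w' = π(alt j u (k-1))
          rcases Nat.eq_zero_or_pos (k-1) with h0 | hpos
          · right
            have hw'1 : w' = 1 := by
              rw [hrep, h0]; simp [alternatingWord, wordProd_nil]
            have hk1 : k = 1 := by omega
            rw [← hcan, hw'1, one_mul, hk1]
            have e : alternatingWord j u 1 = (alternatingWord u j 0).concat u :=
              alternatingWord_succ j u 0
            rw [e]
            simp [alternatingWord, wordProd_concat, wordProd_nil]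
          · exfalso
            have e : alternatingWord j u (k-1) = (alternatingWord u j (k-2)).concat u := by
              conv_lhs => rw [show k-1 = (k-2)+1 by omega]
              exact alternatingWord_succ j u (k-2)
            have hw'' : w = cs.wordProd (alternatingWord u j (k-2)) := by
              rw [← hcan, hrep, e, wordProd_concat, cs.simple_mul_simple_cancel_right]
            have hle := cs.length_wordProd_le (alternatingWord u j (k-2))
            rw [length_alternatingWord] at hle
            rw [← hw''] at hle
            omega
      · -- u = j (j has been substituted by u) : target left disjunct
        set w' := w * cs.simple u with hw'
        have hw'G : w' ∈ Subgroup.closure (cs.simple '' ({i, u} : Set S)) :=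
          mul_mem hwG hmemj
        have hcan : w' * cs.simple u = w := cs.simple_mul_simple_cancel_right u
        rcases ihk (k-1) (by omega) (by omega) w' hw'G (by omega) with hrep | hrep
        · -- w' = π(alt i u (k-1)) : ends with u
          rcases Nat.eq_zero_or_pos (k-1) with h0 | hpos
          · left
            have hw'1 : w' = 1 := by
              rw [hrep, h0]; simp [alternatingWord, wordProd_nil]
            have hk1 : k = 1 := by omega
            rw [← hcan, hw'1, one_mul, hk1]
            have e : alternatingWord i u 1 = (alternatingWord u i 0).concat u :=
              alternatingWord_succ i u 0
            rw [e]
            simp [alternatingWord, wordProd_concat, wordProd_nil]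
          · exfalso
            have e : alternatingWord i u (k-1) = (alternatingWord u i (k-2)).concat u := by
              conv_lhs => rw [show k-1 = (k-2)+1 by omega]
              exact alternatingWord_succ i u (k-2)
            have hw'' : w = cs.wordProd (alternatingWord u i (k-2)) := by
              rw [← hcan, hrep, e, wordProd_concat, cs.simple_mul_simple_cancel_right]
            have hle := cs.length_wordProd_le (alternatingWord u i (k-2))
            rw [length_alternatingWord] at hle
            rw [← hw''] at hle
            omega
        · -- w' = π(alt u i (k-1)) : w = π(alt i u k)
          left
          have e : alternatingWord i u k = (alternatingWord u i (k-1)).concat u := by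
            conv_lhs => rw [show k = (k-1)+1 by omega]
            exact alternatingWord_succ i u (k-1)
          rw [e, wordProd_concat, ← hrep, hcan]


open CoxeterSystem in
theorem act_NN (hact : GeomAction M cs) :
    ∀ (n : ℕ) (w : W) (i : S), cs.length w = n →
      cs.length (w * cs.simple i) = n + 1 → NN (w • alpha i) := by
  intro n
  induction n using Nat.strong_induction_on with
  | _ n IH =>
    intro w i hw hws
    rcases Nat.eq_zero_or_pos n with rfl | hnpos
    · have : w = 1 := cs.length_eq_zero_iff.mp hw
      rw [this, one_smul]
      exact NN_alpha i
    have hw1 : w ≠ 1 := by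
      intro h; rw [h, cs.length_one] at hw; omega
    obtain ⟨j, hj⟩ := cs.exists_rightDescent_of_ne_one hw1
    unfold CoxeterSystem.IsRightDescent at hj
    have hij : j ≠ i := by
      intro h; rw [h, hws, hw] at hj; omega
    have hwj : cs.length (w * cs.simple j) + 1 = n := by
      rcases cs.length_mul_simple w j with h | h
      · omega
      · omega
    have hmemi : cs.simple i ∈ Subgroup.closure (cs.simple '' ({i, j} : Set S)) :=
      Subgroup.subset_closure ⟨i, by simp, rfl⟩
    have hmemj : cs.simple j ∈ Subgroup.closure (cs.simple '' ({i, j} : Set S)) :=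
      Subgroup.subset_closure ⟨j, by simp, rfl⟩
    set G := Subgroup.closure (cs.simple '' ({i, j} : Set S)) with hG
    set A : Set W := {v | v⁻¹ * w ∈ G ∧ cs.length v + cs.length (v⁻¹ * w) = n} with hA
    have hwA : w ∈ A := by
      constructor
      · rw [inv_mul_cancel]; exact one_mem G
      · rw [inv_mul_cancel, cs.length_one, hw]; omega
    have hLne : ((fun u => cs.length u) '' A).Nonempty := ⟨cs.length w, w, hwA, rfl⟩
    obtain ⟨v, hvA, hvd⟩ := Nat.sInf_mem hLne
    have hvd' : cs.length v = sInf ((fun u => cs.length u) '' A) := hvd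
    have hmin : ∀ v' ∈ A, sInf ((fun u => cs.length u) '' A) ≤ cs.length v' :=
      fun v' h => Nat.sInf_le ⟨v', h, rfl⟩
    set x := v⁻¹ * w with hx
    have hvx : w = v * x := by rw [hx, mul_inv_cancel_left]
    have hxG : x ∈ G := hvA.1
    have hsum : cs.length v + cs.length x = n := hvA.2
    have hxs : cs.length (x * cs.simple i) = cs.length x + 1 := by
      rcases cs.length_mul_simple x i with h | h
      · exact h
      · exfalso
        have e : w * cs.simple i = v * (x * cs.simple i) := by
          rw [hvx, mul_assoc]
        have h2 := cs.length_mul_le v (x * cs.simple i)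
        rw [← e, hws] at h2
        omega
    by_cases hv0 : cs.length v = 0
    · -- dihedral case
      have hv1 : v = 1 := cs.length_eq_zero_iff.mp hv0
      have hxw : x = w := by rw [hx, hv1]; group
      have hwG : w ∈ G := hxw ▸ hxG
      rcases dihedral_rep hact (Ne.symm hij) n IH n le_rfl w hwG hw with hrep | hrep
      · -- w = π(alt i j n)
        have e : alternatingWord j i (n+1) = (alternatingWord i j n).concat i :=
          alternatingWord_succ j i n
        have hred : cs.length (cs.wordProd (alternatingWord j i (n+1))) = n + 1 := by
          rw [e, wordProd_concat, ← hrep]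
          exact hws
        have hbound : M j i = 0 ∨ n + 1 ≤ M j i := by
          by_contra hcon
          push_neg at hcon
          refine cs.not_isReduced_alternatingWord j i hcon.1 hcon.2 ?_
          unfold CoxeterSystem.IsReduced
          rw [length_alternatingWord]
          exact hred
        have hbound' : M i j = 0 ∨ n ≤ M i j ∧ n + 1 ≤ M i j := by
          rw [M.symmetric i j]
          rcases hbound with h | h
          · exact Or.inl h
          · exact Or.inr ⟨by omega, h⟩
        have hcoef := (alt_act hact n i j (Ne.symm hij)).1
        rw [hrep, hcoef]
        have c1 : 0 ≤ dchain (cc M i j) n := by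
          apply dchain_cc_nonneg (Ne.symm hij)
          rcases hbound' with h | h
          · exact Or.inl h
          · exact Or.inr h.1
        have c2 : 0 ≤ dchain (cc M i j) (n+1) := by
          apply dchain_cc_nonneg (Ne.symm hij)
          rcases hbound' with h | h
          · exact Or.inl h
          · exact Or.inr h.2
        by_cases he : Even n
        · rw [if_pos he, if_pos he]
          exact NN_combo c2 c1 (NN_alpha i) (NN_alpha j)
        · rw [if_neg he, if_neg he]
          exact NN_combo c1 c2 (NN_alpha i) (NN_alpha j)
      · -- w = π(alt j i n) : impossible, i would then be a descent of w
        exfalso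
        have e : alternatingWord j i n = (alternatingWord i j (n-1)).concat i := by
          conv_lhs => rw [show n = (n-1)+1 by omega]
          exact alternatingWord_succ j i (n-1)
        have hwsi : w * cs.simple i = cs.wordProd (alternatingWord i j (n-1)) := by
          rw [hrep, e, wordProd_concat, cs.simple_mul_simple_cancel_right]
        have hle := cs.length_wordProd_le (alternatingWord i j (n-1))
        rw [length_alternatingWord, ← hwsi] at hle
        omega
    · -- generic case
      have hvpos : 1 ≤ cs.length v := by omega
      have hxpos : 1 ≤ cs.length x := by
        by_contra hc
        have hx0 : cs.length x = 0 := by omega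
        have hx1 : x = 1 := cs.length_eq_zero_iff.mp hx0
        have hvw : v = w := by
          have h' : v * x = v := by rw [hx1, mul_one]
          rw [← hvx] at h'; exact h'.symm
        have hwsjA : w * cs.simple j ∈ A := by
          have e : (w * cs.simple j)⁻¹ * w = cs.simple j := by
            rw [mul_inv_rev, cs.inv_simple, mul_assoc, inv_mul_cancel, mul_one]
          constructor
          · rw [e]; exact hmemj
          · rw [e, cs.length_simple]; omega
        have := hmin _ hwsjA
        rw [hvw] at hvd'
        omega
      have key : ∀ r : S, r ∈ ({i, j} : Set S) →
          cs.length (v * cs.simple r) = cs.length v + 1 := by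
        intro r hr
        rcases cs.length_mul_simple v r with h | h
        · exact h
        · exfalso
          have hmemr : cs.simple r ∈ G := by
            rcases hr with rfl | rfl
            · exact hmemi
            · exact hmemj
          have e : (v * cs.simple r)⁻¹ * w = cs.simple r * x := by
            rw [mul_inv_rev, cs.inv_simple, mul_assoc, hx]
          have hmem : (v * cs.simple r) ∈ A := by
            constructor
            · rw [e]
              exact mul_mem hmemr hxG
            · rw [e]
              have a1 : cs.length (cs.simple r * x) ≤ cs.length x + 1 := by
                have h' := cs.length_mul_le (cs.simple r) x
                rw [cs.length_simple] at h'
                omega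
              have e2 : w = (v * cs.simple r) * (cs.simple r * x) := by
                rw [mul_assoc, cs.simple_mul_simple_cancel_left, ← hvx]
              have a2 := cs.length_mul_le (v * cs.simple r) (cs.simple r * x)
              rw [← e2, hw] at a2
              omega
          have := hmin _ hmem
          omega
      have hvi := key i (by simp)
      have hvj := key j (by simp)
      have hlv : cs.length v < n := by omega
      have hlx : cs.length x < n := by omega
      have h1 : NN (v • alpha i) := IH _ hlv v i rfl hvi
      have h2 : NN (v • alpha j) := IH _ hlv v j rfl hvj
      have h3 : NN (x • alpha i) := IH _ hlx x i rfl hxs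
      have hdecomp : x • alpha i
          = ((x • alpha i) i) • alpha i + ((x • alpha i) j) • alpha j := by
        ext r
        simp only [Finsupp.add_apply, Finsupp.smul_apply, smul_eq_mul]
        by_cases hri : r = i
        · rw [hri, alpha_self, alpha_ne (Ne.symm hij)]
          ring
        · by_cases hrj : r = j
          · rw [hrj, alpha_self, alpha_ne hij]
            ring
          · have hr : r ∉ ({i, j} : Set S) := by
              intro hmem
              rcases hmem with h | h
              · exact hri h
              · exact hrj h
            rw [act_coord hact hxG (alpha i) r hr, alpha_ne (fun h => hri h),
              alpha_ne (fun h => hrj h)]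
            ring
      have hfinal : w • alpha i
          = ((x • alpha i) i) • (v • alpha i) + ((x • alpha i) j) • (v • alpha j) := by
        conv_lhs => rw [hvx, mul_smul, hdecomp]
        rw [act_add hact, act_smul hact, act_smul hact]
      rw [hfinal]
      exact NN_combo (h3 i) (h3 j) h1 h2


/-! ### corollaries of the positivity theorem -/

lemma act_NN_of_nondesc (hact : GeomAction M cs) {w : W} {i : S}
    (h : cs.length (w * cs.simple i) = cs.length w + 1) : NN (w • alpha i) :=
  act_NN hact _ w i rfl h

lemma act_NP_of_desc (hact : GeomAction M cs) {w : W} {i : S}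
    (h : cs.length (w * cs.simple i) + 1 = cs.length w) : NP (w • alpha i) := by
  have hcan : (w * cs.simple i) * cs.simple i = w := cs.simple_mul_simple_cancel_right i
  have h1 : NN ((w * cs.simple i) • alpha i) := by
    refine act_NN_of_nondesc hact ?_
    rw [hcan]
    omega
  have h2 : w • alpha i = -((w * cs.simple i) • alpha i) := by
    conv_lhs => rw [← hcan]
    rw [mul_smul, simple_act_self hact, act_neg hact]
  rw [h2]
  exact NP_neg_of_NN h1

lemma act_dichotomy (hact : GeomAction M cs) (w : W) (i : S) :
    NN (w • alpha i) ∨ NP (w • alpha i) := by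
  rcases cs.length_mul_simple w i with h | h
  · exact Or.inl (act_NN_of_nondesc hact h)
  · exact Or.inr (act_NP_of_desc hact h)

lemma act_NP_left (hact : GeomAction M cs) {w : W} {i : S}
    (h : cs.length (cs.simple i * w) < cs.length w) : NP (w⁻¹ • alpha i) := by
  have e : cs.length (w⁻¹ * cs.simple i) = cs.length (cs.simple i * w) := by
    rw [show w⁻¹ * cs.simple i = (cs.simple i * w)⁻¹ by rw [mul_inv_rev, cs.inv_simple],
      cs.length_inv]
  have hlt : cs.length (w⁻¹ * cs.simple i) < cs.length w⁻¹ := by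
    rw [e, cs.length_inv]; exact h
  apply act_NP_of_desc hact
  rcases cs.length_mul_simple w⁻¹ i with h' | h'
  · omega
  · exact h'

/-! ### roots -/

lemma Phi_alpha (s : S) : alpha s ∈ Phi M cs := ⟨1, s, (one_smul _ _).symm⟩

lemma Phi_smul {γ : GV S} (w : W) (h : γ ∈ Phi M cs) : w • γ ∈ Phi M cs := by
  obtain ⟨u, s, rfl⟩ := h
  exact ⟨w * u, s, (mul_smul w u _).symm⟩

lemma Phi_neg (hact : GeomAction M cs) {γ : GV S} (h : γ ∈ Phi M cs) : -γ ∈ Phi M cs := by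
  obtain ⟨u, s, rfl⟩ := h
  refine ⟨u * cs.simple s, s, ?_⟩
  rw [mul_smul, simple_act_self hact, act_neg hact]

lemma root_norm (hact : GeomAction M cs) {γ : GV S} (h : γ ∈ Phi M cs) : form M γ γ = 1 := by
  obtain ⟨u, s, rfl⟩ := h
  rw [form_inv hact, form_self_alpha]

lemma root_ne_zero (hact : GeomAction M cs) {γ : GV S} (h : γ ∈ Phi M cs) : γ ≠ 0 := by
  intro h0
  have := root_norm hact h
  rw [h0, form_zero_left] at this
  norm_num at this

lemma root_dichotomy (hact : GeomAction M cs) {γ : GV S} (h : γ ∈ Phi M cs) : NN γ ∨ NP γ := by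
  obtain ⟨u, s, rfl⟩ := h
  exact act_dichotomy hact u s

/-! ### parabolic subgroups -/

lemma WP_mono {I J : Set S} (h : I ⊆ J) : WP M cs I ≤ WP M cs J :=
  Subgroup.closure_mono (Set.image_mono h)

lemma simple_mem_WP {I : Set S} {k : S} (h : k ∈ I) : cs.simple k ∈ WP M cs I :=
  Subgroup.subset_closure ⟨k, h, rfl⟩

lemma act_coordWP (hact : GeomAction M cs) {X : Set S} {w : W} (hw : w ∈ WP M cs X)
    (v : GV S) (r : S) (hr : r ∉ X) : (w • v) r = v r :=
  act_coord hact hw v r hr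

lemma finiteType_mono {K' K : Set S} (h : K' ⊆ K) (hf : FiniteType M cs K) :
    FiniteType M cs K' :=
  hf.subset (WP_mono h)

lemma finite_of_finiteType (hact : GeomAction M cs) {K : Set S} (h : FiniteType M cs K) :
    K.Finite := by
  have hinj : Set.InjOn (fun k => cs.simple k) K := by
    intro a _ b _ hab
    by_contra hne
    have h1 : cs.simple a • alpha a = -(alpha a) := simple_act_self hact a
    have h2 : cs.simple b • alpha a
        = alpha a - (2 * form M (alpha b) (alpha a)) • alpha b := hact b (alpha a)
    have hab' : cs.simple a = cs.simple b := hab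
    have h3 : (-(alpha a) : GV S)
        = alpha a - (2 * form M (alpha b) (alpha a)) • alpha b := by
      rw [← h1, hab', h2]
    have h4 := congrArg (fun v : GV S => v a) h3
    simp only [Finsupp.neg_apply, Finsupp.sub_apply, Finsupp.smul_apply, smul_eq_mul] at h4
    rw [alpha_self, alpha_ne (i := b) (r := a) hne] at h4
    norm_num at h4
  have himg : (fun k => cs.simple k) '' K ⊆ (WP M cs K : Set W) := by
    rintro _ ⟨k, hk, rfl⟩
    exact simple_mem_WP hk
  exact Set.Finite.of_finite_image (h.subset himg) hinj

/-! ### longest elements -/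

lemma w0_spec {L : Set S} (h : FiniteType M cs L) :
    w0 M cs L ∈ WP M cs L ∧ ∀ u ∈ WP M cs L, cs.length u ≤ cs.length (w0 M cs L) := by
  have hne : h.toFinset.Nonempty := ⟨1, h.mem_toFinset.mpr (one_mem _)⟩
  obtain ⟨b, hbF, hb⟩ := Finset.exists_max_image h.toFinset (fun u => cs.length u) hne
  have hex : ∃ w ∈ WP M cs L, ∀ u ∈ WP M cs L, cs.length u ≤ cs.length w := by
    refine ⟨b, h.mem_toFinset.mp hbF, fun u hu => hb u (h.mem_toFinset.mpr hu)⟩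
  rw [w0, dif_pos hex]
  exact ⟨hex.choose_spec.1, hex.choose_spec.2⟩

lemma w0_NP (hact : GeomAction M cs) {L : Set S} (h : FiniteType M cs L) {k : S} (hk : k ∈ L) :
    NP (w0 M cs L • alpha k) := by
  obtain ⟨hmem, hmax⟩ := w0_spec h
  have hm : w0 M cs L * cs.simple k ∈ WP M cs L := mul_mem hmem (simple_mem_WP hk)
  have hle := hmax _ hm
  have hne := cs.length_mul_simple_ne (w0 M cs L) k
  apply act_NP_of_desc hact
  rcases cs.length_mul_simple (w0 M cs L) k with h' | h'
  · omega
  · exact h'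

/-! ### the key negativity lemma -/

lemma omega_neg (hact : GeomAction M cs) {K : Set S} (hK : FiniteType M cs K) (t : S)
    {β : GV S} (hβPhi : β ∈ Phi M cs) (hβNN : NN β) (hβsupp : ∀ r, r ∉ K → β r = 0)
    (hβt : 0 < β t) :
    NP ((w0 M cs K * w0 M cs (K \ {t})) • β) ∧
      (w0 M cs K * w0 M cs (K \ {t})) • β ∈ Phi M cs := by
  set K' : Set S := K \ {t} with hK'
  have hK'T : FiniteType M cs K' := finiteType_mono Set.diff_subset hK
  have hw1WP : w0 M cs K' ∈ WP M cs K' := (w0_spec hK'T).1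
  rw [mul_smul]
  set β' := w0 M cs K' • β with hβ'
  have hβ'Phi : β' ∈ Phi M cs := Phi_smul _ hβPhi
  have hβ't : β' t = β t := act_coordWP hact hw1WP β t (by simp [hK'])
  have hβ'NN : NN β' := by
    rcases root_dichotomy hact hβ'Phi with h | h
    · exact h
    · exfalso
      have := h t
      rw [hβ't] at this
      linarith
  have hβ'supp : ∀ r, r ∉ K → β' r = 0 := by
    intro r hr
    have hr' : r ∉ K' := fun hh => hr hh.1
    rw [act_coordWP hact hw1WP β r hr']
    exact hβsupp r hr
  constructor
  · have hexp : w0 M cs K • β' = β'.sum fun k a => a • (w0 M cs K • alpha k) := by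
      conv_lhs => rw [eq_sum_alpha β']
      simp only [Finsupp.sum]
      rw [act_fsum hact]
      exact Finset.sum_congr rfl fun k _ => act_smul hact _ _ _
    intro r
    rw [hexp]
    simp only [Finsupp.sum]
    rw [Finsupp.finset_sum_apply]
    apply Finset.sum_nonpos
    intro k hkmem
    have hkK : k ∈ K := by
      by_contra hkn
      exact (Finsupp.mem_support_iff.mp hkmem) (hβ'supp k hkn)
    have hNPk := w0_NP hact hK hkK
    simp only [Finsupp.smul_apply, smul_eq_mul]
    exact mul_nonpos_of_nonneg_of_nonpos (hβ'NN k) (hNPk r)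
  · exact Phi_smul _ hβ'Phi

/-! ### an auxiliary positive definite invariant form -/

def B2 (u v : GV S) : ℝ := u.sum fun s a => a * v s

lemma B2_add_left (u v w : GV S) : B2 (u + v) w = B2 u w + B2 v w :=
  Finsupp.sum_add_index' (fun s => by simp) (fun s a b => by ring)

lemma B2_smul_left (r : ℝ) (u w : GV S) : B2 (r • u) w = r * B2 u w := by
  rw [B2, Finsupp.sum_smul_index (fun s => by simp), B2, Finsupp.mul_sum]
  exact Finsupp.sum_congr fun s _ => by ring

lemma B2_zero_left (w : GV S) : B2 0 w = 0 := Finsupp.sum_zero_index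

lemma B2_add_right (u v w : GV S) : B2 u (v + w) = B2 u v + B2 u w := by
  simp only [B2, Finsupp.sum, Finsupp.add_apply]
  rw [← Finset.sum_add_distrib]
  exact Finset.sum_congr rfl fun s _ => by ring

lemma B2_smul_right (r : ℝ) (u w : GV S) : B2 u (r • w) = r * B2 u w := by
  simp only [B2, Finsupp.sum, Finsupp.smul_apply, smul_eq_mul]
  rw [Finset.mul_sum]
  exact Finset.sum_congr rfl fun s _ => by ring

lemma B2_self_nonneg (v : GV S) : 0 ≤ B2 v v := by
  simp only [B2, Finsupp.sum]
  apply Finset.sum_nonneg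
  intro s _
  exact mul_self_nonneg _

lemma B2_self_pos {v : GV S} (h : v ≠ 0) : 0 < B2 v v := by
  simp only [B2, Finsupp.sum]
  obtain ⟨s, hs⟩ := Finsupp.support_nonempty_iff.mpr h
  apply Finset.sum_pos'
  · intro r _; exact mul_self_nonneg _
  · refine ⟨s, hs, ?_⟩
    have hv : v s ≠ 0 := Finsupp.mem_support_iff.mp hs
    exact mul_self_pos.mpr hv

def Bav {K : Set S} (hK : FiniteType M cs K) (u v : GV S) : ℝ :=
  ∑ g ∈ hK.toFinset, B2 (g • u) (g • v)

lemma Bav_add_right (hact : GeomAction M cs) {K : Set S} (hK : FiniteType M cs K)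
    (u v w : GV S) : Bav hK u (v + w) = Bav hK u v + Bav hK u w := by
  rw [Bav, Bav, Bav, ← Finset.sum_add_distrib]
  exact Finset.sum_congr rfl fun g _ => by rw [act_add hact, B2_add_right]

lemma Bav_smul_right (hact : GeomAction M cs) {K : Set S} (hK : FiniteType M cs K)
    (r : ℝ) (u v : GV S) : Bav hK u (r • v) = r * Bav hK u v := by
  rw [Bav, Bav, Finset.mul_sum]
  exact Finset.sum_congr rfl fun g _ => by rw [act_smul hact, B2_smul_right]

lemma Bav_add_left (hact : GeomAction M cs) {K : Set S} (hK : FiniteType M cs K)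
    (u v w : GV S) : Bav hK (u + v) w = Bav hK u w + Bav hK v w := by
  rw [Bav, Bav, Bav, ← Finset.sum_add_distrib]
  exact Finset.sum_congr rfl fun g _ => by rw [act_add hact, B2_add_left]

lemma Bav_smul_left (hact : GeomAction M cs) {K : Set S} (hK : FiniteType M cs K)
    (r : ℝ) (u v : GV S) : Bav hK (r • u) v = r * Bav hK u v := by
  rw [Bav, Bav, Finset.mul_sum]
  exact Finset.sum_congr rfl fun g _ => by rw [act_smul hact, B2_smul_left]

lemma Bav_sub_smul_left (hact : GeomAction M cs) {K : Set S} (hK : FiniteType M cs K)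
    (c : ℝ) (u x v : GV S) : Bav hK (u - c • x) v = Bav hK u v - c * Bav hK x v := by
  rw [sub_eq_add_neg, ← neg_smul, Bav_add_left hact, Bav_smul_left hact]
  ring

lemma Bav_self_pos (hact : GeomAction M cs) {K : Set S} (hK : FiniteType M cs K)
    {v : GV S} (h : v ≠ 0) : 0 < Bav hK v v := by
  rw [Bav]
  apply Finset.sum_pos'
  · intro g _; exact B2_self_nonneg _
  · refine ⟨1, hK.mem_toFinset.mpr (one_mem _), ?_⟩
    rw [one_smul]
    exact B2_self_pos h

lemma Bav_inv (hact : GeomAction M cs) {K : Set S} (hK : FiniteType M cs K)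
    {w : W} (hw : w ∈ WP M cs K) (u v : GV S) :
    Bav hK (w • u) (w • v) = Bav hK u v := by
  rw [Bav, Bav]
  refine Finset.sum_bij' (fun g _ => g * w) (fun g _ => g * w⁻¹) ?_ ?_ ?_ ?_ ?_
  · intro g hg
    exact hK.mem_toFinset.mpr (mul_mem (hK.mem_toFinset.mp hg) hw)
  · intro g hg
    exact hK.mem_toFinset.mpr (mul_mem (hK.mem_toFinset.mp hg) (inv_mem hw))
  · intro g hg; rw [mul_assoc, mul_inv_cancel, mul_one]
  · intro g hg; rw [mul_assoc, inv_mul_cancel, mul_one]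
  · intro g hg
    rw [mul_smul, mul_smul]

lemma Bav_zero_left (hact : GeomAction M cs) {K : Set S} (hK : FiniteType M cs K)
    (v : GV S) : Bav hK 0 v = 0 := by
  rw [Bav]
  apply Finset.sum_eq_zero
  intro g _
  rw [act_zero hact, B2_zero_left]

lemma Bav_fsum_left (hact : GeomAction M cs) {K : Set S} (hK : FiniteType M cs K)
    {ι : Type*} (F : Finset ι) (f : ι → GV S) (v : GV S) :
    Bav hK (∑ l ∈ F, f l) v = ∑ l ∈ F, Bav hK (f l) v := by
  classical
  induction F using Finset.induction with
  | empty => simp [Bav_zero_left hact]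
  | insert a F' h ih =>
    rw [Finset.sum_insert h, Finset.sum_insert h, Bav_add_left hact, ih]

lemma exists_dvec (hact : GeomAction M cs) {K : Set S} (hK : FiniteType M cs K)
    (hKfin : K.Finite) :
    ∃ d : GV S, ∀ k ∈ K, Bav hK (alpha k) d = 1 := by
  classical
  set F := hKfin.toFinset with hF
  set em : (↥F → ℝ) → GV S := fun x => ∑ l : ↥F, x l • alpha (l : S) with hem
  have hem_add : ∀ x y, em (x + y) = em x + em y := by
    intro x y
    simp only [hem, Pi.add_apply, add_smul]
    rw [Finset.sum_add_distrib]
  have hem_smul : ∀ (r : ℝ) x, em (r • x) = r • em x := by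
    intro r x
    simp only [hem, Pi.smul_apply, smul_eq_mul, mul_smul]
    rw [Finset.smul_sum]
  have hem_coord : ∀ (x : ↥F → ℝ) (k : ↥F), (em x) (k : S) = x k := by
    intro x k
    rw [hem]
    simp only []
    rw [Finsupp.finset_sum_apply]
    rw [Finset.sum_eq_single_of_mem k (Finset.mem_univ k)]
    · rw [Finsupp.smul_apply, alpha_self, smul_eq_mul, mul_one]
    · intro l _ hlk
      rw [Finsupp.smul_apply,
        alpha_ne (i := (l : S)) (r := (k : S)) (fun hh => hlk (Subtype.coe_injective hh).symm),
        smul_eq_mul, mul_zero]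
  set φ : (↥F → ℝ) →ₗ[ℝ] (↥F → ℝ) :=
    { toFun := fun x k => Bav hK (alpha (k : S)) (em x)
      map_add' := fun x y => funext fun k => by
        rw [hem_add, Bav_add_right hact]
        rfl
      map_smul' := fun r x => funext fun k => by
        rw [hem_smul, Bav_smul_right hact]
        rfl } with hφ
  have hinj : Function.Injective φ := by
    intro x y hxy
    -- reduce to x - y; easier: show ker trivial
    have key : ∀ z : ↥F → ℝ, φ z = 0 → z = 0 := by
      intro z hz
      have h1 : Bav hK (em z) (em z) = 0 := by
        rw [hem]
        simp only []
        rw [Bav_fsum_left hact]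
        apply Finset.sum_eq_zero
        intro l _
        rw [Bav_smul_left hact]
        have : Bav hK (alpha (l : S)) (em z) = 0 := by
          have := congrFun hz l
          simpa [hφ, hem] using this
        rw [hem] at this
        simp only [] at this
        rw [this, mul_zero]
      have h2 : em z = 0 := by
        by_contra hne
        have := Bav_self_pos hact hK hne
        rw [h1] at this
        exact lt_irrefl _ this
      funext k
      have := hem_coord z k
      rw [h2] at this
      simpa using this.symm
    have := key (x - y) (by rw [map_sub, hxy, sub_self])
    have h3 : x - y = 0 := this
    have := sub_eq_zero.mp h3
    exact this
  have hsurj : Function.Surjective φ := (LinearMap.injective_iff_surjective).mp hinj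
  obtain ⟨x, hx⟩ := hsurj (fun _ => 1)
  refine ⟨em x, fun k hk => ?_⟩
  have hkF : k ∈ F := hKfin.mem_toFinset.mpr hk
  have := congrFun hx ⟨k, hkF⟩
  simpa [hφ] using this

lemma exists_chamber (hact : GeomAction M cs) {K : Set S} (hK : FiniteType M cs K)
    (hKfin : K.Finite) (p : GV S) :
    ∃ g ∈ WP M cs K, ∀ k ∈ K, 0 ≤ form M (alpha k) (g • p) := by
  classical
  obtain ⟨d, hd⟩ := exists_dvec hact hK hKfin
  have hne : (hK.toFinset.image (fun g => g • p)).Nonempty := by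
    refine ⟨(1 : W) • p, Finset.mem_image.mpr ⟨1, hK.mem_toFinset.mpr (one_mem _), rfl⟩⟩
  obtain ⟨q0, hq0mem, hq0max⟩ :=
    Finset.exists_max_image (hK.toFinset.image (fun g => g • p)) (fun q => Bav hK q d) hne
  obtain ⟨g, hgT, rfl⟩ := Finset.mem_image.mp hq0mem
  refine ⟨g, hK.mem_toFinset.mp hgT, fun k hk => ?_⟩
  have hskmem : cs.simple k • (g • p) ∈ hK.toFinset.image (fun g => g • p) := by
    refine Finset.mem_image.mpr ⟨cs.simple k * g, ?_, ?_⟩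
    · exact hK.mem_toFinset.mpr (mul_mem (simple_mem_WP hk) (hK.mem_toFinset.mp hgT))
    · rw [mul_smul]
  have hle := hq0max _ hskmem
  rw [hact, Bav_sub_smul_left hact, hd k hk, mul_one] at hle
  linarith

lemma exists_generic (N : Finset (GV S)) (H : Submodule ℝ (GV S)) :
    ∃ p ∈ H, ∀ γ ∈ N, (∃ h ∈ H, form M γ h ≠ 0) → form M γ p ≠ 0 := by
  classical
  induction N using Finset.induction with
  | empty => exact ⟨0, zero_mem H, by simp⟩
  | insert _ _ hnotmem ih =>
    rename_i γ0 N'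
    obtain ⟨p, hpH, hp⟩ := ih
    by_cases h0 : ∃ h ∈ H, form M γ0 h ≠ 0
    · by_cases hp0 : form M γ0 p ≠ 0
      · refine ⟨p, hpH, fun γ hγ hcond => ?_⟩
        rcases Finset.mem_insert.mp hγ with rfl | hγN
        · exact hp0
        · exact hp γ hγN hcond
      · push_neg at hp0
        obtain ⟨h₀, hh₀H, hh₀⟩ := h0
        set E : Finset ℝ := insert 0 (N'.image fun γ => -(form M γ p) / (form M γ h₀)) with hE
        obtain ⟨ε, hε⟩ := Infinite.exists_notMem_finset E
        have hε0 : ε ≠ 0 := fun h => hε (h ▸ Finset.mem_insert_self 0 _)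
        refine ⟨p + ε • h₀, H.add_mem hpH (H.smul_mem ε hh₀H), fun γ hγ hcond => ?_⟩
        rcases Finset.mem_insert.mp hγ with rfl | hγN
        · rw [form_add_right, form_smul_right, hp0, zero_add]
          exact mul_ne_zero hε0 hh₀
        · have hne := hp γ hγN hcond
          rw [form_add_right, form_smul_right]
          intro heq
          by_cases hzh : form M γ h₀ = 0
          · rw [hzh, mul_zero, add_zero] at heq
            exact hne heq
          · have hval : ε = -(form M γ p) / (form M γ h₀) := by
              field_simp
              linarith
            exact hε (Finset.mem_insert.mpr (Or.inr
              (Finset.mem_image.mpr ⟨γ, hγN, hval.symm⟩)))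
    · refine ⟨p, hpH, fun γ hγ hcond => ?_⟩
      rcases Finset.mem_insert.mp hγ with rfl | hγN
      · exact absurd hcond h0
      · exact hp γ hγN hcond

lemma act_fix_span (hact : GeomAction M cs) {w : W} {X : Set (GV S)}
    (h : ∀ v ∈ X, w • v = v) :
    ∀ p ∈ Submodule.span ℝ X, w • p = p := by
  intro p hp
  refine Submodule.span_induction (p := fun v _ => w • v = v) h ?_ ?_ ?_ hp
  · exact act_zero hact w
  · intro a b _ _ ha hb
    rw [act_add hact, ha, hb]
  · intro r a _ ha
    rw [act_smul hact, ha]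

lemma span_supp {X : Set S} :
    ∀ p ∈ Submodule.span ℝ (alpha '' X), ∀ r, r ∉ X → p r = 0 := by
  intro p hp
  refine Submodule.span_induction (p := fun v _ => ∀ r, r ∉ X → v r = 0) ?_ ?_ ?_ ?_ hp
  · rintro _ ⟨k, hk, rfl⟩ r hr
    exact alpha_ne (fun hh => hr (hh ▸ hk))
  · intro r _; simp
  · intro a b _ _ ha hb r hr
    rw [Finsupp.add_apply, ha r hr, hb r hr, add_zero]
  · intro c a _ ha r hr
    rw [Finsupp.smul_apply, ha r hr, smul_zero]

lemma M_eq_two {k r : S} (hne : k ≠ r) (hnadj : ¬ Adj M k r) : M k r = 2 := by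
  rw [Adj] at hnadj
  push_neg at hnadj
  have := M.off_diagonal k r hne
  omega

end Development

/-- For any semi-standard decomposition `ω_{n-1} ⋯ ω_1 ω_0` of an element of `W`,
for each `0 ≤ i ≤ n-1` there exists an element of `Π_{K^{(i)} ∖ {t^{(i)}}}` which is
not fixed by `ω_i`. -/
theorem semistandard_component_moves_some_root {S W : Type*} [Group W] (M : CoxeterMatrix S)
    (cs : CoxeterSystem M W) [MulAction W (GV S)] (hact : GeomAction M cs) {Λ : Type*}
    {u : W} {y z : SInj S Λ} {J : Set S} (D : SemiStd M cs Λ u y z J) :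
    ∀ i : Fin D.n, ∃ s ∈ D.Ks i \ {D.ts i}, D.om i • alpha s ≠ alpha s := by
  intro i
  by_contra hcon
  push_neg at hcon
  set K := D.Ks i with hKdef
  set t := D.ts i with htdef
  set ω := D.om i with homdef
  set y := D.ys i.castSucc with hydef
  set C : Set S := (rng y ∪ D.Js i.castSucc) ∪ {t} with hCdef
  have hKst : K = {s ∈ C | ∃ t' ∈ ({t} : Set S), ConnIn M C t' s} := by
    have := D.h_K i
    simp only [sTilde] at this
    exact this
  have htK : t ∈ K := by
    rw [hKst]
    exact ⟨Or.inr rfl, t, rfl, Relation.ReflTransGen.refl⟩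
  have hext : ∀ k ∈ K, ∀ r ∈ C, Adj M k r → r ∈ K := by
    intro k hk r hrC hadj
    rw [hKst] at hk ⊢
    obtain ⟨hkC, t', ht', hconn⟩ := hk
    have hconn' : Relation.ReflTransGen (fun a b => b ∈ C ∧ Adj M a b) t' k := hconn
    exact ⟨hrC, t', ht', hconn'.tail ⟨hrC, hadj⟩⟩
  have hKT : FiniteType M cs K := D.h_K_fin i
  have hKfin : K.Finite := finite_of_finiteType hact hKT
  set K' : Set S := K \ {t} with hK'def
  have hK'T : FiniteType M cs K' := finiteType_mono Set.diff_subset hKT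
  have homeq : ω = w0 M cs K * w0 M cs K' := D.h_om i
  have homWP : ω ∈ WP M cs K := by
    rw [homeq]
    exact mul_mem (w0_spec hKT).1 (WP_mono Set.diff_subset (w0_spec hK'T).1)
  have hty : t ∉ rng y ∪ D.Js i.castSucc := D.h_t_notin i
  have keyF6 : ∀ β : GV S, β ∈ Phi M cs → NN β → (∀ r, r ∉ K → β r = 0) → 0 < β t →
      NP (ω • β) ∧ ω • β ∈ Phi M cs := by
    intro β h1 h2 h3 h4
    rw [homeq]
    exact omega_neg hact hKT t h1 h2 h3 h4
  have hat_supp : ∀ r, r ∉ K → alpha t r = 0 :=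
    fun r hr => alpha_ne (fun hh => hr (hh ▸ htK))
  have hatP := keyF6 (alpha t) (Phi_alpha t) (NN_alpha t) hat_supp
    (by rw [alpha_self]; norm_num)
  have hom1 : ω ≠ 1 := by
    intro h
    have := hatP.1 t
    rw [h, one_smul, alpha_self] at this
    norm_num at this
  set H := Submodule.span ℝ (alpha '' K') with hHdef
  have hfixH : ∀ p ∈ H, ω • p = p := by
    apply act_fix_span hact
    rintro _ ⟨s, hs, rfl⟩
    exact hcon s hs
  set T := hKT.toFinset with hTdef
  set N : Finset (GV S) := (T ×ˢ hKfin.toFinset).image (fun gk => gk.1⁻¹ • alpha gk.2)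
    with hNdef
  obtain ⟨p, hpH, hgen⟩ := exists_generic N H
  obtain ⟨g, hgWP, hgch⟩ := exists_chamber hact hKT hKfin p
  set q := g • p with hqdef
  set om' := g * ω * g⁻¹ with hom'def
  have hom'WP : om' ∈ WP M cs K := mul_mem (mul_mem hgWP homWP) (inv_mem hgWP)
  have hom'1 : om' ≠ 1 := by
    intro h
    apply hom1
    have he : ω = g⁻¹ * om' * g := by rw [hom'def]; group
    rw [he, h]
    group
  have hom'q : om' • q = q := by
    rw [hom'def, hqdef, mul_smul, mul_smul, inv_smul_smul, hfixH p hpH]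
  obtain ⟨k₀, hk₀⟩ := cs.exists_leftDescent_of_ne_one hom'1
  unfold CoxeterSystem.IsLeftDescent at hk₀
  set γ1 := om'⁻¹ • alpha k₀ with hγ1def
  have hNPk : NP γ1 := act_NP_left hact hk₀
  have hom'invWP : om'⁻¹ ∈ WP M cs K := inv_mem hom'WP
  have hk₀K : k₀ ∈ K := by
    by_contra h
    have h1 := act_coordWP hact hom'invWP (alpha k₀) k₀ h
    rw [alpha_self] at h1
    have h2 := hNPk k₀
    rw [hγ1def] at h2
    rw [h1] at h2
    norm_num at h2
  have hγ1supp : ∀ r, r ∉ K → γ1 r = 0 := by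
    intro r hr
    rw [hγ1def, act_coordWP hact hom'invWP (alpha k₀) r hr]
    exact alpha_ne (fun hh => hr (hh ▸ hk₀K))
  have hpair : form M q γ1 = form M q (alpha k₀) := by
    conv_lhs => rw [← form_inv hact om' q γ1]
    rw [hom'q, hγ1def, smul_inv_smul]
  have hq_nonneg : ∀ k ∈ K, 0 ≤ form M q (alpha k) := fun k hk => by
    rw [form_comm]; exact hgch k hk
  have hle0 : form M q γ1 ≤ 0 := by
    rw [form_expand_right]
    simp only [Finsupp.sum]
    apply Finset.sum_nonpos
    intro k hkmem
    have hkK : k ∈ K := by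
      by_contra h
      exact (Finsupp.mem_support_iff.mp hkmem) (hγ1supp k h)
    exact mul_nonpos_of_nonpos_of_nonneg (hNPk k) (hq_nonneg k hkK)
  have hzero : form M q γ1 = 0 := le_antisymm hle0 (by rw [hpair]; exact hq_nonneg k₀ hk₀K)
  set γ3 := g⁻¹ • γ1 with hγ3def
  have hγ3N : γ3 ∈ N := by
    refine Finset.mem_image.mpr ⟨(g * ω, k₀), ?_, ?_⟩
    · exact Finset.mem_product.mpr
        ⟨hKT.mem_toFinset.mpr (mul_mem hgWP homWP), hKfin.mem_toFinset.mpr hk₀K⟩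
    · show (g * ω)⁻¹ • alpha k₀ = γ3
      rw [hγ3def, hγ1def, hom'def, ← mul_smul]
      congr 1
      group
  have hγ3p : form M γ3 p = 0 := by
    have h1 : form M γ3 p = form M γ1 q := by
      rw [← form_inv hact g γ3 p, hγ3def, smul_inv_smul, ← hqdef]
    rw [h1, form_comm]
    exact hzero
  have hγ3perp : ∀ h ∈ H, form M γ3 h = 0 := by
    by_contra hcon2
    push_neg at hcon2
    obtain ⟨h, hH, hne⟩ := hcon2
    exact (hgen γ3 hγ3N ⟨h, hH, hne⟩) hγ3p
  have hγ3Phi : γ3 ∈ Phi M cs := by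
    rw [hγ3def, hγ1def]
    exact Phi_smul _ (Phi_smul _ (Phi_alpha k₀))
  have hγ3supp : ∀ r, r ∉ K → γ3 r = 0 := by
    intro r hr
    rw [hγ3def, act_coordWP hact (inv_mem hgWP) γ1 r hr]
    exact hγ1supp r hr
  obtain ⟨γ, hγPhi, hγNN, hγpm⟩ : ∃ γ, γ ∈ Phi M cs ∧ NN γ ∧ (γ = γ3 ∨ γ = -γ3) := by
    rcases root_dichotomy hact hγ3Phi with h | h
    · exact ⟨γ3, hγ3Phi, h, Or.inl rfl⟩
    · exact ⟨-γ3, Phi_neg hact hγ3Phi, fun r => by simpa using h r, Or.inr rfl⟩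
  have hγsupp : ∀ r, r ∉ K → γ r = 0 := by
    intro r hr
    rcases hγpm with rfl | rfl
    · exact hγ3supp r hr
    · rw [Finsupp.neg_apply, hγ3supp r hr, neg_zero]
  have hγperp : ∀ h ∈ H, form M γ h = 0 := by
    intro h hH
    rcases hγpm with rfl | rfl
    · exact hγ3perp h hH
    · have hnl : form M (-γ3) h = - form M γ3 h := by
        have h2 := form_sub_left (M := M) 0 γ3 h
        rw [form_zero_left] at h2
        simpa using h2
      rw [hnl, hγ3perp h hH, neg_zero]
  have hαK' : ∀ k ∈ K', form M γ (alpha k) = 0 :=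
    fun k hk => hγperp (alpha k) (Submodule.subset_span ⟨k, hk, rfl⟩)
  have hγt : 0 < γ t := by
    rcases eq_or_lt_of_le (hγNN t) with he | h
    · exfalso
      have hsuppK' : ∀ k, k ∈ γ.support → k ∈ K' := by
        intro k hkmem
        have hkne : γ k ≠ 0 := Finsupp.mem_support_iff.mp hkmem
        have hkK : k ∈ K := by
          by_contra h
          exact hkne (hγsupp k h)
        refine ⟨hkK, fun hkt => ?_⟩
        rw [Set.mem_singleton_iff] at hkt
        exact hkne (hkt ▸ he.symm)
      have hnorm := root_norm hact hγPhi
      rw [form_expand_right] at hnorm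
      have hzero2 : (γ.sum fun k a => a * form M γ (alpha k)) = 0 := by
        simp only [Finsupp.sum]
        apply Finset.sum_eq_zero
        intro k hk
        rw [hαK' k (hsuppK' k hk), mul_zero]
      rw [hzero2] at hnorm
      norm_num at hnorm
    · exact h
  obtain ⟨hNPf, hPhif⟩ := keyF6 γ hγPhi hγNN hγsupp hγt
  have hY := (D.h_Y i).2
  have hγmem : γ ∈ PhiPerp M cs Set.univ (rng y) ∩ PhiPos M cs := by
    constructor
    · constructor
      · exact ⟨hγPhi, fun s hs => absurd (Set.mem_univ s) hs⟩
      · intro r hr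
        by_cases hrK : r ∈ K
        · apply hαK'
          refine ⟨hrK, fun hrt => ?_⟩
          rw [Set.mem_singleton_iff] at hrt
          exact hty (hrt ▸ Or.inl hr)
        · rw [form_comm, form_expand_right]
          simp only [Finsupp.sum]
          apply Finset.sum_eq_zero
          intro k hkmem
          have hkK : k ∈ K := by
            by_contra h
            exact (Finsupp.mem_support_iff.mp hkmem) (hγsupp k h)
          have hne : k ≠ r := fun h => hrK (h ▸ hkK)
          have hnadj : ¬ Adj M k r := fun hadj =>
            hrK (hext k hkK r (Or.inl (Or.inl hr)) hadj)
          rw [form_alpha_alpha, cform_comm, cform_two (M_eq_two hne hnadj), mul_zero]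
    · exact ⟨hγPhi, hγNN⟩
  have hpos := hY γ hγmem
  have hNNf : NN (ω • γ) := hpos.2
  have hzero3 : (ω • γ) = 0 := NN_NP_zero hNNf hNPf
  exact (root_ne_zero hact hPhif) hzero3


end CoxeterCentralizer
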